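/- Let (R_t, W_t) for t = 1, ..., γ be pairs of non-negative reals satisfying W_t − W_{t+1} ≤ α·R_t for all t ≤ γ−1 and W_γ ≤ α·R_γ, with α ≥ 1. Then for any c ∈ [1, γ·α], there exists an index ℓ ∈ [1, γ] such that W_ℓ ≥ W_1/c and R_ℓ ≥ (1 − 1/c)·W_1/(γ·α). -/

import Mathlib

/-- Bicriteria version of the simple charging property: for any target
parameter `c ∈ [1, γ·α]` there is an index `ℓ ∈ [1, γ]` with
`W ℓ ≥ W 1 / c` and `R ℓ ≥ (1 − 1/c) · W 1 / (γ·α)`. -/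
theorem stmt_3 (γ : ℕ) (hγ : 1 ≤ γ) (R W : ℕ → ℝ) (α c : ℝ)
    (hR : ∀ t, 0 ≤ R t) (hW : ∀ t, 0 ≤ W t) (hα : 1 ≤ α)
    (hc1 : 1 ≤ c) (hc2 : c ≤ γ * α)
    (hstep : ∀ t, 1 ≤ t → t ≤ γ - 1 → W t - W (t + 1) ≤ α * R t)
    (hlast : W γ ≤ α * R γ) :
    ∃ ℓ, 1 ≤ ℓ ∧ ℓ ≤ γ ∧ W 1 / c ≤ W ℓ ∧ (1 - 1 / c) * W 1 / (γ * α) ≤ R ℓ := by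
  set B : ℝ := (1 - 1 / c) * W 1 / (γ * α) with hB
  have hα0 : (0:ℝ) < α := lt_of_lt_of_le one_pos hα
  have hγ0 : (0:ℝ) < (γ:ℝ) := by exact_mod_cast Nat.lt_of_lt_of_le Nat.zero_lt_one hγ
  have hγα : (0:ℝ) < (γ:ℝ) * α := mul_pos hγ0 hα0
  have hc0 : (0:ℝ) < c := lt_of_lt_of_le one_pos hc1
  have h1c0 : 0 ≤ 1 - 1 / c := by
    have : 1 / c ≤ 1 := by
      rw [div_le_one hc0]; exact hc1
    linarith
  have h1c1 : 1 - 1 / c ≤ 1 := by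
    have : 0 ≤ 1 / c := le_of_lt (div_pos one_pos hc0)
    linarith
  have hB0 : 0 ≤ B := by
    apply div_nonneg (mul_nonneg h1c0 (hW 1)) (le_of_lt hγα)
  have hBW : (γ:ℝ) * α * B = (1 - 1 / c) * W 1 := by
    field_simp [hB]
    rw [hB]; field_simp
  -- telescoping bound
  have key : ∀ n, 1 ≤ n → n ≤ γ →
      W 1 - W n ≤ α * ∑ i ∈ Finset.range (n - 1), R (i + 1) := by
    intro n hn1 hnγ
    have htel : ∑ i ∈ Finset.range (n - 1), (W (i + 1) - W (i + 2)) = W 1 - W n := by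
      have := Finset.sum_range_sub' (fun i => W (i + 1)) (n - 1)
      simpa [Nat.sub_add_cancel hn1] using this
    rw [← htel, Finset.mul_sum]
    apply Finset.sum_le_sum
    intro i hi
    have hi' : i < n - 1 := Finset.mem_range.mp hi
    have h1 : 1 ≤ i + 1 := Nat.le_add_left 1 i
    have h2 : i + 1 ≤ γ - 1 := le_trans hi' (Nat.sub_le_sub_right hnγ 1)
    have := hstep (i + 1) h1 h2
    simpa using this
  -- existence of an index with large revenue
  have hex : ∃ t, 1 ≤ t ∧ t ≤ γ ∧ B ≤ R t := by
    by_contra h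
    push_neg at h
    have hsum : ∑ i ∈ Finset.range (γ - 1), R (i + 1) ≤ ((γ:ℝ) - 1) * B := by
      have hcard : ((γ - 1 : ℕ) : ℝ) = (γ:ℝ) - 1 := by
        push_cast [Nat.cast_sub hγ]; ring
      calc ∑ i ∈ Finset.range (γ - 1), R (i + 1)
          ≤ ∑ _i ∈ Finset.range (γ - 1), B := by
            apply Finset.sum_le_sum
            intro i hi
            have hi' : i < γ - 1 := Finset.mem_range.mp hi
            exact le_of_lt (h (i + 1) (Nat.le_add_left 1 i)
              (le_trans hi' (Nat.sub_le γ 1)))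
        _ = ((γ - 1 : ℕ) : ℝ) * B := by
            rw [Finset.sum_const, Finset.card_range, nsmul_eq_mul]
        _ = ((γ:ℝ) - 1) * B := by rw [hcard]
    have hRγ : R γ < B := h γ hγ le_rfl
    have h1 : W 1 - W γ ≤ α * (((γ:ℝ) - 1) * B) := by
      have := key γ hγ le_rfl
      have := mul_le_mul_of_nonneg_left hsum (le_of_lt hα0)
      linarith [key γ hγ le_rfl]
    have h2 : W γ < α * B := lt_of_le_of_lt hlast (by nlinarith)
    have h3 : W 1 < (γ:ℝ) * α * B := by nlinarith
    rw [hBW] at h3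
    nlinarith [hW 1]
  -- take the least such index
  classical
  set ℓ := Nat.find hex with hℓdef
  obtain ⟨hℓ1, hℓγ, hℓR⟩ := Nat.find_spec hex
  refine ⟨ℓ, hℓ1, hℓγ, ?_, hℓR⟩
  -- all earlier indices have small revenue
  have hmin : ∀ t, 1 ≤ t → t < ℓ → R t < B := by
    intro t ht1 htℓ
    have := Nat.find_min hex htℓ
    push_neg at this
    exact this ht1 (le_trans (le_of_lt htℓ) hℓγ)
  have hsum : ∑ i ∈ Finset.range (ℓ - 1), R (i + 1) ≤ ((ℓ:ℝ) - 1) * B := by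
    have hcard : ((ℓ - 1 : ℕ) : ℝ) = (ℓ:ℝ) - 1 := by
      push_cast [Nat.cast_sub (show 1 ≤ ℓ from hℓ1)]; ring
    calc ∑ i ∈ Finset.range (ℓ - 1), R (i + 1)
        ≤ ∑ _i ∈ Finset.range (ℓ - 1), B := by
          apply Finset.sum_le_sum
          intro i hi
          have hi' : i < ℓ - 1 := Finset.mem_range.mp hi
          have : i + 1 < ℓ := by omega
          exact le_of_lt (hmin (i + 1) (Nat.le_add_left 1 i) this)
      _ = ((ℓ - 1 : ℕ) : ℝ) * B := by
          rw [Finset.sum_const, Finset.card_range, nsmul_eq_mul]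
      _ = ((ℓ:ℝ) - 1) * B := by rw [hcard]
  have h1 : W 1 - W ℓ ≤ α * (((ℓ:ℝ) - 1) * B) := by
    have hk := key ℓ hℓ1 hℓγ
    have := mul_le_mul_of_nonneg_left hsum (le_of_lt hα0)
    linarith
  have hℓle : (ℓ:ℝ) ≤ (γ:ℝ) := by exact_mod_cast hℓγ
  have h2 : α * (((ℓ:ℝ) - 1) * B) ≤ (γ:ℝ) * α * B := by
    have hb : ((ℓ:ℝ) - 1) * B ≤ (γ:ℝ) * B :=
      mul_le_mul_of_nonneg_right (by linarith) hB0
    calc α * (((ℓ:ℝ) - 1) * B) ≤ α * ((γ:ℝ) * B) :=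
          mul_le_mul_of_nonneg_left hb (le_of_lt hα0)
      _ = (γ:ℝ) * α * B := by ring
  have h3 : W 1 - W ℓ ≤ (1 - 1 / c) * W 1 := by rw [← hBW]; linarith
  have h4 : W 1 / c = W 1 - (1 - 1 / c) * W 1 := by
    field_simp
    ring
  linarith
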